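/- Let 0 → N → N ⊕ ℤ → ℤ → 0 be the canonical split exact sequence of lattices, s : N ⊕ ℤ → N the projection and φ : N ⊕ ℤ → ℤ the second projection. For a polyhedral cone σ ⊆ (N ⊕ ℤ) ⊗ ℚ, the set s(σ ∩ φ^{-1}(1)) is a polyhedron in N ⊗ ℚ (possibly empty) whose recession cone is s(σ ∩ φ^{-1}(0)) = σ ∩ (N ⊗ ℚ), provided σ ∩ φ^{-1}(1) ≠ ∅. -/
import Mathlib

open Finset

/-- A set is polyhedral: finite system of linear inequalities. -/
def IsPolyQ (d : ℕ) (S : Set (Fin d → ℚ)) : Prop :=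
  ∃ (ι : Type) (_ : Fintype ι) (A : ι → Fin d → ℚ) (b : ι → ℚ),
    S = {x | ∀ j, b j ≤ ∑ i, A j i * x i}

lemma rowcomb (d : ℕ) (u v x : Fin d → ℚ) (r s : ℚ) :
    ∑ i, (r * u i - s * v i) * x i
      = r * (∑ i, u i * x i) - s * (∑ i, v i * x i) := by
  rw [Finset.mul_sum, Finset.mul_sum, ← Finset.sum_sub_distrib]
  congr 1; ext i; ring

/-- Fourier–Motzkin elimination of one variable. -/
lemma fm (d : ℕ) (ι : Type) [Fintype ι] (A : ι → Fin d → ℚ) (a b : ι → ℚ) :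
    IsPolyQ d {x | ∃ t : ℚ, ∀ j, b j ≤ (∑ i, A j i * x i) + a j * t} := by
  classical
  refine ⟨ι ⊕ ι × ι, inferInstance,
    Sum.elim (fun j => if a j = 0 then A j else 0)
      (fun pq => if 0 < a pq.1 ∧ a pq.2 < 0 then
        (fun i => a pq.1 * A pq.2 i - a pq.2 * A pq.1 i) else 0),
    Sum.elim (fun j => if a j = 0 then b j else 0)
      (fun pq => if 0 < a pq.1 ∧ a pq.2 < 0 then
        a pq.1 * b pq.2 - a pq.2 * b pq.1 else 0), ?_⟩
  ext x
  simp only [Set.mem_setOf_eq]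
  constructor
  · rintro ⟨t, ht⟩ j
    rcases j with j | ⟨p, q⟩
    · by_cases h : a j = 0
      · simp only [Sum.elim_inl, h, if_true]
        have := ht j; rw [h] at this; linarith
      · simp [Sum.elim_inl, h]
    · by_cases h : 0 < a p ∧ a q < 0
      · simp only [Sum.elim_inr, if_pos h]
        rw [rowcomb]
        have hp := ht p
        have hq := ht q
        nlinarith [h.1, h.2, hp, hq]
      · simp [Sum.elim_inr, if_neg h]
  · intro hx
    set L : ι → ℚ := fun j => ∑ i, A j i * x i with hL
    have hz : ∀ j, a j = 0 → b j ≤ L j := by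
      intro j hj
      have := hx (Sum.inl j)
      simpa [Sum.elim_inl, hj, hL] using this
    have hpq : ∀ p q, 0 < a p → a q < 0 →
        a p * b q - a q * b p ≤ a p * L q - a q * L p := by
      intro p q hp hq
      have hcond : 0 < a p ∧ a q < 0 := ⟨hp, hq⟩
      have := hx (Sum.inr (p, q))
      simp only [Sum.elim_inr, if_pos hcond] at this
      rw [rowcomb] at this
      exact this
    -- construct a witness t
    classical
    set f : ι → ℚ := fun j => (b j - L j) / a j with hf
    have key : ∀ t : ℚ, (∀ j, 0 < a j → f j ≤ t) → (∀ j, a j < 0 → t ≤ f j) →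
        ∀ j, b j ≤ L j + a j * t := by
      intro t hlo hhi j
      rcases lt_trichotomy (a j) 0 with h | h | h
      · have h1 := hhi j h
        have : a j * t ≥ a j * f j := by
          exact mul_le_mul_of_nonpos_left h1 (le_of_lt h)
        have h2 : a j * f j = b j - L j := by
          simp only [hf]; rw [mul_comm, div_mul_cancel₀ _ (ne_of_lt h)]
        linarith
      · have := hz j h; rw [h]; linarith
      · have h1 := hlo j h
        have : a j * f j ≤ a j * t := mul_le_mul_of_nonneg_left h1 (le_of_lt h)
        have h2 : a j * f j = b j - L j := by
          simp only [hf]; rw [mul_comm, div_mul_cancel₀ _ (ne_of_gt h)]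
        linarith
    by_cases hP : (Finset.univ.filter (fun j => 0 < a j)).Nonempty
    · set P := Finset.univ.filter (fun j => 0 < a j) with hPdef
      set t := (P.image f).max' (hP.image f) with htdef
      obtain ⟨p, hpP, hpt⟩ := Finset.mem_image.mp ((P.image f).max'_mem (hP.image f))
      have hpa : 0 < a p := by
        have := Finset.mem_filter.mp hpP; exact this.2
      refine ⟨t, key t ?_ ?_⟩
      · intro j hj
        exact Finset.le_max' _ _ (Finset.mem_image.mpr ⟨j, Finset.mem_filter.mpr ⟨Finset.mem_univ _, hj⟩, rfl⟩)
      · intro j hj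
        rw [htdef, ← hpt]
        have h := hpq p j hpa hj
        have e1 : a p * f p = b p - L p := by
          simp only [hf]; rw [mul_comm, div_mul_cancel₀ _ (ne_of_gt hpa)]
        have e2 : a j * f j = b j - L j := by
          simp only [hf]; rw [mul_comm, div_mul_cancel₀ _ (ne_of_lt hj)]
        have hneg : a p * a j < 0 := mul_neg_of_pos_of_neg hpa hj
        nlinarith [h, e1, e2, hneg]
    · by_cases hN : (Finset.univ.filter (fun j => a j < 0)).Nonempty
      · set N := Finset.univ.filter (fun j => a j < 0) with hNdef
        set t := (N.image f).min' (hN.image f) with htdef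
        refine ⟨t, key t ?_ ?_⟩
        · intro j hj
          exact absurd (Finset.mem_filter.mpr ⟨Finset.mem_univ j, hj⟩) (by
            intro hmem; exact hP ⟨j, hmem⟩)
        · intro j hj
          exact Finset.min'_le _ _ (Finset.mem_image.mpr ⟨j, Finset.mem_filter.mpr ⟨Finset.mem_univ _, hj⟩, rfl⟩)
      · refine ⟨0, key 0 ?_ ?_⟩
        · intro j hj
          exact absurd (Finset.mem_filter.mpr ⟨Finset.mem_univ j, hj⟩) (by
            intro hmem; exact hP ⟨j, hmem⟩)
        · intro j hj
          exact absurd (Finset.mem_filter.mpr ⟨Finset.mem_univ j, hj⟩) (by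
            intro hmem; exact hN ⟨j, hmem⟩)

/-- A finitely generated cone is polyhedral (Weyl). -/
lemma cone_poly (d : ℕ) : ∀ (m : ℕ) (w : Fin m → Fin d → ℚ),
    IsPolyQ d {x | ∃ c : Fin m → ℚ, (∀ i, 0 ≤ c i) ∧ x = ∑ i, c i • w i} := by
  intro m
  induction m with
  | zero =>
    intro w
    refine ⟨Fin d ⊕ Fin d, inferInstance,
      Sum.elim (fun j i => if i = j then 1 else 0)
        (fun j i => if i = j then -1 else 0), 0, ?_⟩
    have hs1 : ∀ x : Fin d → ℚ, ∀ j, ∑ i, (if i = j then (1:ℚ) else 0) * x i = x j := by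
      intro x j
      rw [Finset.sum_eq_single j] <;> simp +contextual
    have hs2 : ∀ x : Fin d → ℚ, ∀ j, ∑ i, (if i = j then (-1:ℚ) else 0) * x i = -x j := by
      intro x j
      rw [Finset.sum_eq_single j] <;> simp +contextual
    ext x
    simp only [Set.mem_setOf_eq]
    constructor
    · rintro ⟨c, -, rfl⟩ j
      rcases j with j | j
      · simp [hs1]
      · simp [hs2]
    · intro h
      refine ⟨0, fun i => le_refl 0, funext fun j => ?_⟩
      have h1 := h (Sum.inl j)
      have h2 := h (Sum.inr j)
      simp only [Sum.elim_inl, Sum.elim_inr, Pi.zero_apply, hs1, hs2] at h1 h2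
      simp only [Finset.univ_eq_empty, Finset.sum_empty, Pi.zero_apply]
      linarith
  | succ m ih =>
    intro w
    obtain ⟨ι, inst, A, b, hAb⟩ := ih (fun i => w i.castSucc)
    have hmem : ∀ y : Fin d → ℚ,
        (∃ c : Fin m → ℚ, (∀ i, 0 ≤ c i) ∧ y = ∑ i, c i • w i.castSucc)
          ↔ ∀ j, b j ≤ ∑ i, A j i * y i := fun y => Set.ext_iff.mp hAb y
    have split : ∀ x : Fin d → ℚ,
        (∃ c : Fin (m+1) → ℚ, (∀ i, 0 ≤ c i) ∧ x = ∑ i, c i • w i)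
        ↔ ∃ t : ℚ, 0 ≤ t ∧ ∃ c : Fin m → ℚ, (∀ i, 0 ≤ c i) ∧
            x - t • w (Fin.last m) = ∑ i, c i • w i.castSucc := by
      intro x; constructor
      · rintro ⟨c, hc, rfl⟩
        refine ⟨c (Fin.last m), hc _, fun i => c i.castSucc, fun i => hc _, ?_⟩
        rw [Fin.sum_univ_castSucc]
        abel
      · rintro ⟨t, ht, c, hc, hx⟩
        refine ⟨Fin.snoc c t, ?_, ?_⟩
        · intro i
          refine Fin.lastCases ?_ ?_ i
          · simpa using ht
          · intro i; simpa using hc i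
        · rw [Fin.sum_univ_castSucc]
          simp only [Fin.snoc_castSucc, Fin.snoc_last]
          rw [← hx]; abel
    have key : {x | ∃ c : Fin (m+1) → ℚ, (∀ i, 0 ≤ c i) ∧ x = ∑ i, c i • w i}
        = {x | ∃ t : ℚ, ∀ o : Option ι,
            (Option.elim o 0 b) ≤ (∑ i, (Option.elim o 0 A) i * x i)
              + (Option.elim o 1 (fun j => -(∑ i, A j i * w (Fin.last m) i))) * t} := by
      ext x
      simp only [Set.mem_setOf_eq]
      rw [split x]
      constructor
      · rintro ⟨t, ht, hc⟩
        refine ⟨t, fun o => ?_⟩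
        rcases o with _ | j
        · simpa using ht
        · have := (hmem _).mp hc j
          simp only [Option.elim] at *
          have expand : ∑ i, A j i * (x - t • w (Fin.last m)) i
              = (∑ i, A j i * x i) + (-(∑ i, A j i * w (Fin.last m) i)) * t := by
            have e : ∀ i, A j i * (x - t • w (Fin.last m)) i
                = A j i * x i - (A j i * w (Fin.last m) i) * t := by
              intro i
              simp only [Pi.sub_apply, Pi.smul_apply, smul_eq_mul]
              ring
            rw [Finset.sum_congr rfl (fun i _ => e i), Finset.sum_sub_distrib,
              ← Finset.sum_mul]
            ring
          rw [← expand]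
          exact this
      · rintro ⟨t, ho⟩
        have ht : 0 ≤ t := by simpa using ho none
        refine ⟨t, ht, (hmem _).mpr fun j => ?_⟩
        have := ho (some j)
        simp only [Option.elim] at this
        have expand : ∑ i, A j i * (x - t • w (Fin.last m)) i
            = (∑ i, A j i * x i) + (-(∑ i, A j i * w (Fin.last m) i)) * t := by
          have e : ∀ i, A j i * (x - t • w (Fin.last m)) i
              = A j i * x i - (A j i * w (Fin.last m) i) * t := by
            intro i
            simp only [Pi.sub_apply, Pi.smul_apply, smul_eq_mul]
            ring
          rw [Finset.sum_congr rfl (fun i _ => e i), Finset.sum_sub_distrib,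
            ← Finset.sum_mul]
          ring
        rw [expand]
        exact this
    rw [key]
    exact fm d (Option ι) _ _ _

lemma IsPolyQ.matrix {d : ℕ} {S : Set (Fin d → ℚ)} (h : IsPolyQ d S) :
    ∃ (k : ℕ) (A : Matrix (Fin k) (Fin d) ℚ) (b : Fin k → ℚ),
      S = {x | ∀ j, b j ≤ A.mulVec x j} := by
  obtain ⟨ι, inst, A, b, hS⟩ := h
  refine ⟨Fintype.card ι, fun j i => A ((Fintype.equivFin ι).symm j) i,
    fun j => b ((Fintype.equivFin ι).symm j), ?_⟩
  rw [hS]; ext x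
  simp only [Set.mem_setOf_eq, Matrix.mulVec, dotProduct]
  constructor
  · intro h j; exact h _
  · intro h j; simpa using h (Fintype.equivFin ι j)

/-- for a polyhedral cone `σ ⊆ ℚ^{n+1}`, `s(σ ∩ φ⁻¹(1))` is a
polyhedron in `ℚⁿ` whose recession cone is `s(σ ∩ φ⁻¹(0))`, provided
`σ ∩ φ⁻¹(1) ≠ ∅`; here `s` forgets the last coordinate and `φ` is the last
coordinate. -/
theorem downgrade_slice_polyhedron
    (n m : ℕ) (w : Fin m → (Fin (n + 1) → ℚ)) (σ : Set (Fin (n + 1) → ℚ))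
    (hσ : σ = {x | ∃ c : Fin m → ℚ, (∀ i, 0 ≤ c i) ∧ x = ∑ i, c i • w i})
    (φ : (Fin (n + 1) → ℚ) → ℚ) (hφ : φ = fun x => x (Fin.last n))
    (s : (Fin (n + 1) → ℚ) → (Fin n → ℚ)) (hs : s = fun x i => x i.castSucc)
    (Δ : Set (Fin n → ℚ)) (hΔ : Δ = s '' (σ ∩ {x | φ x = 1}))
    (hne : (σ ∩ {x | φ x = 1}).Nonempty) :
    (∃ (k : ℕ) (A : Matrix (Fin k) (Fin n) ℚ) (b : Fin k → ℚ),
      Δ = {x | ∀ j, b j ≤ A.mulVec x j}) ∧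
    {v | ∀ x ∈ Δ, ∀ t : ℚ, 0 ≤ t → x + t • v ∈ Δ}
      = s '' (σ ∩ {x | φ x = 0}) := by
  classical
  obtain ⟨k, A, b, hA⟩ := (cone_poly (n+1) m w).matrix
  have hσA : σ = {y | ∀ j, b j ≤ A.mulVec y j} := hσ.trans hA
  have hsnoc : ∀ (x : Fin n → ℚ) (r : ℚ), s (Fin.snoc x r) = x := by
    intro x r; rw [hs]; funext i
    exact Fin.snoc_castSucc _ _ _
  have hy : ∀ y : Fin (n+1) → ℚ, Fin.snoc (s y) (φ y) = y := by
    intro y; rw [hs, hφ]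
    exact Fin.snoc_init_self y
  -- slice description
  have hslice : ∀ r : ℚ, s '' (σ ∩ {x | φ x = r}) = {x | Fin.snoc x r ∈ σ} := by
    intro r; ext x
    constructor
    · rintro ⟨y, ⟨hyσ, hyφ⟩, rfl⟩
      have : Fin.snoc (s y) r = y := by
        rw [← hyφ]; exact hy y
      simpa [Set.mem_setOf_eq, this] using hyσ
    · intro hx
      exact ⟨Fin.snoc x r, ⟨hx, by rw [hφ]; exact Fin.snoc_last _ _⟩, hsnoc x r⟩
  have hΔ' : Δ = {x | Fin.snoc x 1 ∈ σ} := by rw [hΔ, hslice]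
  have mulVec_snoc : ∀ (x : Fin n → ℚ) (r : ℚ) (j : Fin k),
      A.mulVec (Fin.snoc x r) j
        = (∑ i : Fin n, A j i.castSucc * x i) + A j (Fin.last n) * r := by
    intro x r j
    simp only [Matrix.mulVec, dotProduct]
    rw [Fin.sum_univ_castSucc]
    simp [Fin.snoc_castSucc, Fin.snoc_last]
  constructor
  · -- polyhedrality of Δ
    refine ⟨k, fun j i => A j i.castSucc, fun j => b j - A j (Fin.last n), ?_⟩
    rw [hΔ']
    ext x
    simp only [Set.mem_setOf_eq, hσA]
    constructor
    · intro h j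
      have := h j
      rw [mulVec_snoc] at this
      simp only [Matrix.mulVec, dotProduct]
      linarith
    · intro h j
      have := h j
      simp only [Matrix.mulVec, dotProduct] at this
      rw [mulVec_snoc]
      linarith
  · -- recession cone
    rw [hslice]
    -- closure of σ under y + t • z
    have hclose : ∀ y z : Fin (n+1) → ℚ, y ∈ σ → z ∈ σ → ∀ t : ℚ, 0 ≤ t →
        y + t • z ∈ σ := by
      rw [hσ]
      rintro y z ⟨c, hc, rfl⟩ ⟨c', hc', rfl⟩ t ht
      refine ⟨fun i => c i + t * c' i, fun i => add_nonneg (hc i) (mul_nonneg ht (hc' i)), ?_⟩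
      rw [Finset.smul_sum, ← Finset.sum_add_distrib]
      refine Finset.sum_congr rfl fun i _ => ?_
      rw [add_smul, smul_smul]
    have hsnocadd : ∀ (x v : Fin n → ℚ) (t : ℚ),
        (Fin.snoc x 1 : Fin (n+1) → ℚ) + t • (Fin.snoc v 0 : Fin (n+1) → ℚ)
          = (Fin.snoc (x + t • v) 1 : Fin (n+1) → ℚ) := by
      intro x v t
      funext i
      refine Fin.lastCases ?_ ?_ i
      · simp [Fin.snoc_last]
      · intro i; simp [Fin.snoc_castSucc]
    ext v
    simp only [Set.mem_setOf_eq]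
    constructor
    · intro hv
      -- use the base point
      obtain ⟨y₀, hy₀⟩ := hne
      have hx₀ : s y₀ ∈ Δ := by rw [hΔ]; exact ⟨y₀, hy₀, rfl⟩
      set x₀ := s y₀ with hx₀def
      -- b j ≤ 0
      have hb0 : ∀ j, b j ≤ (0 : ℚ) := by
        have h0 : (0 : Fin (n+1) → ℚ) ∈ σ := by
          rw [hσ]; exact ⟨0, fun i => le_refl 0, by simp⟩
        rw [hσA] at h0
        intro j
        have := h0 j
        simpa [Matrix.mulVec_zero] using this
      rw [hσA]
      intro j
      rw [mulVec_snoc]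
      set β := ∑ i : Fin n, A j i.castSucc * v i with hβ
      set α := ∑ i : Fin n, A j i.castSucc * x₀ i with hα
      have hineq : ∀ t : ℚ, 0 ≤ t → b j ≤ (α + t * β) + A j (Fin.last n) := by
        intro t ht
        have hmem := hv x₀ hx₀ t ht
        rw [hΔ', Set.mem_setOf_eq, hσA] at hmem
        have := hmem j
        rw [mulVec_snoc] at this
        have e : ∑ i : Fin n, A j i.castSucc * (x₀ + t • v) i = α + t * β := by
          rw [hα, hβ, Finset.mul_sum, ← Finset.sum_add_distrib]
          refine Finset.sum_congr rfl fun i _ => ?_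
          simp only [Pi.add_apply, Pi.smul_apply, smul_eq_mul]
          ring
        rw [e] at this
        linarith
    -- need: b j ≤ β + A j last * 0 = β ; show 0 ≤ β
      have hβ0 : 0 ≤ β := by
        by_contra hneg
        push_neg at hneg
        have h0 := hineq 0 (le_refl 0)
        set t₀ := (α + A j (Fin.last n) - b j + 1) / (-β) with ht₀
        have hnum : 0 < α + A j (Fin.last n) - b j + 1 := by linarith
        have ht₀pos : 0 < t₀ := div_pos hnum (by linarith)
        have := hineq t₀ (le_of_lt ht₀pos)
        have hb' : (-β) ≠ 0 := ne_of_gt (by linarith : (0:ℚ) < -β)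
        have he : t₀ * β = -(α + A j (Fin.last n) - b j + 1) := by
          rw [ht₀, div_mul_eq_mul_div, div_eq_iff hb']; ring
        linarith
      have := hb0 j
      linarith
    · intro hv x hx t ht
      rw [hΔ', Set.mem_setOf_eq]
      rw [hΔ', Set.mem_setOf_eq] at hx
      rw [← hsnocadd]
      exact hclose _ _ hx hv t ht
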